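/- Let C be a BL-chain of cancellative type, i.e. for all x, y, z ∈ C, if x + y = x + z and x ⊗ y = x ⊗ z then y = z. Then the monoid of good sequences of C under the sum of sequences is cancellative: for all good sequences 𝐚, 𝐛, 𝐜 in C, if 𝐚 + 𝐜 = 𝐛 + 𝐜 then 𝐚 = 𝐛. -/

import Mathlib

/-- A BL-algebra: a bounded lattice with a commutative monoid operation `mul`
(written ⊗, with unit `⊤` playing the role of 1 and `⊥` the role of 0),
a residuum `imp` (written →), satisfying residuation, divisibility and
prelinearity. -/
class BLAlgebra (L : Type*) extends Lattice L, BoundedOrder L where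
  mul : L → L → L
  imp : L → L → L
  mul_comm : ∀ x y : L, mul x y = mul y x
  mul_assoc : ∀ x y z : L, mul (mul x y) z = mul x (mul y z)
  mul_top : ∀ x : L, mul x ⊤ = x
  residuation : ∀ x y z : L, mul x y ≤ z ↔ x ≤ imp y z
  divisibility : ∀ x y : L, x ⊓ y = mul x (imp x y)
  prelinearity : ∀ x y : L, imp x y ⊔ imp y x = ⊤

namespace BLAlgebra

variable {L : Type*} [BLAlgebra L]

/-- Negation: x̄ := x → 0. -/
def neg (x : L) : L := imp x ⊥

/-- Pseudo-addition: x ⊘ y := x̄ → y. -/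
def oslash (x y : L) : L := imp (neg x) y

/-- Addition: x + y := (x ⊘ y) ∧ (y ⊘ x). -/
def add (x y : L) : L := oslash x y ⊓ oslash y x

end BLAlgebra

open BLAlgebra
/-- A good sequence in a BL-algebra `L` (indexed from 0, so `a 0` is the entry a₁):
aᵢ + aᵢ₊₁ = aᵢ for all i, and aᵣ = 0 for all sufficiently large r. -/
def BLAlgebra.IsGood {L : Type*} [BLAlgebra L] (a : ℕ → L) : Prop :=
  (∀ i, add (a i) (a (i + 1)) = a i) ∧ ∃ n, ∀ r, n < r → a r = ⊥

/-- Sum (under the BL-algebra addition) of a list of elements. -/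
def BLAlgebra.bigAdd {L : Type*} [BLAlgebra L] (l : List L) : L := l.foldr add ⊥

/-- Sum of sequences: cᵢ := aᵢ + (aᵢ₋₁ ⊗ b₁) + ⋯ + (a₁ ⊗ bᵢ₋₁) + bᵢ
(written with 0-based indexing: the entry at index k is
a k + (a (k-1) ⊗ b 0) + ⋯ + (a 0 ⊗ b (k-1)) + b k). -/
def BLAlgebra.seqAdd {L : Type*} [BLAlgebra L] (a b : ℕ → L) : ℕ → L :=
  fun k => bigAdd (a k :: (((List.range k).map fun j => mul (a (k - 1 - j)) (b j)) ++ [b k]))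

namespace BLAlgebra

variable {L : Type*} [BLAlgebra L]

lemma mul_le_of_le_imp {x y z : L} (h : x ≤ imp y z) : mul x y ≤ z :=
  (residuation x y z).2 h

lemma le_imp_of_mul_le {x y z : L} (h : mul x y ≤ z) : x ≤ imp y z :=
  (residuation x y z).1 h

lemma mul_le_mul_left {x x' : L} (h : x ≤ x') (y : L) : mul x y ≤ mul x' y :=
  mul_le_of_le_imp (h.trans (le_imp_of_mul_le (le_refl (mul x' y))))

lemma top_mul (x : L) : mul ⊤ x = x := (mul_comm ⊤ x).trans (mul_top x)

lemma mul_le_mul_right (x : L) {y y' : L} (h : y ≤ y') : mul x y ≤ mul x y' := by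
  rw [mul_comm x y, mul_comm x y']; exact mul_le_mul_left h x

lemma mul_le_left (x y : L) : mul x y ≤ x := by
  have := mul_le_mul_right x (le_top : y ≤ ⊤); rwa [mul_top] at this

lemma mul_le_right (x y : L) : mul x y ≤ y := by
  rw [mul_comm]; exact mul_le_left y x

lemma imp_eq_top {x y : L} : imp x y = ⊤ ↔ x ≤ y := by
  constructor
  · intro h
    have : mul (⊤ : L) x ≤ y := mul_le_of_le_imp (le_of_eq h.symm)
    rwa [top_mul] at this
  · intro h
    exact le_antisymm le_top (le_imp_of_mul_le (by rwa [top_mul]))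

lemma mul_bot (x : L) : mul x ⊥ = ⊥ := le_antisymm (mul_le_right x ⊥) bot_le

lemma bot_mul (x : L) : mul ⊥ x = ⊥ := by rw [mul_comm]; exact mul_bot x

lemma imp_bot_left (x : L) : imp ⊥ x = ⊤ := imp_eq_top.2 bot_le

lemma imp_top' (x : L) : imp x ⊤ = ⊤ := imp_eq_top.2 le_top

lemma top_imp (x : L) : imp ⊤ x = x := by
  refine le_antisymm ?_ (le_imp_of_mul_le (by rw [mul_top]))
  have := mul_le_of_le_imp (le_refl (imp ⊤ x)); rwa [mul_top] at this

lemma le_imp (x y : L) : x ≤ imp y x := le_imp_of_mul_le (mul_le_left x y)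

lemma imp_le_imp_right (x : L) {y y' : L} (h : y ≤ y') : imp x y ≤ imp x y' :=
  le_imp_of_mul_le ((mul_le_of_le_imp (le_refl _)).trans h)

lemma imp_le_imp_left {x x' : L} (h : x ≤ x') (y : L) : imp x' y ≤ imp x y :=
  le_imp_of_mul_le (le_trans (mul_le_mul_right _ h) (mul_le_of_le_imp (le_refl _)))

lemma mul_neg_self (x : L) : mul x (neg x) ≤ ⊥ := by
  rw [mul_comm]; exact mul_le_of_le_imp (le_refl (neg x))

lemma neg_bot' : (neg (⊥ : L)) = ⊤ := imp_eq_top.2 le_rfl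

lemma neg_top' : (neg (⊤ : L)) = ⊥ := top_imp ⊥

lemma neg_antitone {x y : L} (h : x ≤ y) : neg y ≤ neg x := imp_le_imp_left h ⊥

lemma le_negneg (x : L) : x ≤ neg (neg x) := le_imp_of_mul_le (mul_neg_self x)

lemma add_bot' (x : L) : add x ⊥ = x := by
  show imp (neg x) ⊥ ⊓ imp (neg ⊥) x = x
  rw [neg_bot', top_imp]
  exact inf_eq_right.mpr (le_negneg x)

lemma add_comm' (x y : L) : add x y = add y x := inf_comm _ _

lemma bot_add' (x : L) : add ⊥ x = x := by rw [add_comm']; exact add_bot' x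

lemma add_top' (x : L) : add x ⊤ = ⊤ := by
  show imp (neg x) ⊤ ⊓ imp (neg ⊤) x = ⊤
  rw [imp_top', neg_top', imp_bot_left, inf_idem]

lemma top_add' (x : L) : add ⊤ x = ⊤ := by rw [add_comm']; exact add_top' x

lemma add_le_add_right' {y y' : L} (h : y ≤ y') (x : L) : add x y ≤ add x y' :=
  inf_le_inf (imp_le_imp_right _ h) (imp_le_imp_left (neg_antitone h) _)

lemma le_add_left (x y : L) : x ≤ add x y := by
  have := add_le_add_right' (bot_le : (⊥ : L) ≤ y) x
  rwa [add_bot'] at this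

lemma le_add_right (x y : L) : y ≤ add x y := by rw [add_comm']; exact le_add_left y x

/-- In a BL-chain of cancellative type, a good pair with first entry ≠ ⊤ has
second entry ⊥. -/
lemma good_pair_bot (htot : ∀ x y : L, x ≤ y ∨ y ≤ x)
    (hcanc : ∀ x y z : L, add x y = add x z → mul x y = mul x z → y = z) {x y : L} (hxy : add x y = x) (hx : x ≠ ⊤) : y = ⊥ := by
  have hm : mul x y = ⊥ := by
    have hone : oslash x y ≠ ⊤ ∨ oslash y x ≠ ⊤ := by
      by_contra hcon
      push_neg at hcon
      apply hx
      rw [← hxy]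
      show oslash x y ⊓ oslash y x = ⊤
      rw [hcon.1, hcon.2, inf_idem]
    rcases hone with h1 | h1
    · have hy : ¬ neg x ≤ y := fun hle => h1 (imp_eq_top.2 hle)
      have hyx : y ≤ neg x := (htot (neg x) y).resolve_left hy
      have : mul x y ≤ ⊥ := (mul_le_mul_right x hyx).trans (mul_neg_self x)
      exact le_antisymm this bot_le
    · have hy : ¬ neg y ≤ x := fun hle => h1 (imp_eq_top.2 hle)
      have hxy' : x ≤ neg y := (htot (neg y) x).resolve_left hy
      have : mul x y ≤ ⊥ := by
        rw [mul_comm]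
        exact (mul_le_mul_right y hxy').trans (mul_neg_self y)
      exact le_antisymm this bot_le
  exact hcanc x y ⊥ (by rw [hxy, add_bot']) (by rw [hm, mul_bot])

/-- Canonical-shape predicate: `⊤` before index `m`, `⊥` after it. -/
def Canon (a : ℕ → L) (m : ℕ) : Prop :=
  (∀ i, i < m → a i = ⊤) ∧ ∀ i, m < i → a i = ⊥

lemma exists_canon (htot : ∀ x y : L, x ≤ y ∨ y ≤ x)
    (hcanc : ∀ x y z : L, add x y = add x z → mul x y = mul x z → y = z)
    (hnt : (⊥ : L) ≠ ⊤) {a : ℕ → L} (ha : IsGood a) :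
    ∃ m, Canon a m := by
  classical
  obtain ⟨n, hn⟩ := ha.2
  have hex : ∃ i, a i ≠ ⊤ := ⟨n + 1, by rw [hn (n + 1) (Nat.lt_succ_self n)]; exact hnt⟩
  let m := Nat.find hex
  refine ⟨m, fun i hi => not_not.1 (Nat.find_min hex hi), ?_⟩
  have key : ∀ d, a (m + 1 + d) = ⊥ := by
    intro d
    induction d with
    | zero => exact good_pair_bot htot hcanc (ha.1 m) (Nat.find_spec hex)
    | succ d ih =>
      have h1 := ha.1 (m + 1 + d)
      rw [ih, bot_add'] at h1
      have : m + 1 + (d + 1) = m + 1 + d + 1 := by omega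
      rw [this, h1]
  intro i hi
  have : i = m + 1 + (i - m - 1) := by omega
  rw [this]; exact key _

/-! ### bigAdd lemmas -/

lemma bigAdd_nil : bigAdd ([] : List L) = ⊥ := rfl

lemma bigAdd_cons (x : L) (l : List L) : bigAdd (x :: l) = add x (bigAdd l) := rfl

lemma bigAdd_bot {l : List L} (h : ∀ x ∈ l, x = ⊥) : bigAdd l = ⊥ := by
  induction l with
  | nil => rfl
  | cons x l ih =>
    rw [bigAdd_cons, h x List.mem_cons_self, bot_add']
    exact ih fun y hy => h y (List.mem_cons_of_mem _ hy)

lemma bigAdd_append_bot {l₁ l₂ : List L} (h : ∀ x ∈ l₁, x = ⊥) :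
    bigAdd (l₁ ++ l₂) = bigAdd l₂ := by
  induction l₁ with
  | nil => rfl
  | cons x l ih =>
    rw [List.cons_append, bigAdd_cons, h x List.mem_cons_self, bot_add']
    exact ih fun y hy => h y (List.mem_cons_of_mem _ hy)

lemma bigAdd_append_right_bot {l₁ l₂ : List L} (h : bigAdd l₂ = ⊥) :
    bigAdd (l₁ ++ l₂) = bigAdd l₁ := by
  show List.foldr add ⊥ _ = _
  rw [List.foldr_append]
  show List.foldr add (bigAdd l₂) l₁ = _
  rw [h]; rfl

lemma bigAdd_top {l : List L} (h : (⊤ : L) ∈ l) : bigAdd l = ⊤ := by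
  induction l with
  | nil => simp at h
  | cons x l ih =>
    rcases List.mem_cons.1 h with h | h
    · rw [bigAdd_cons, ← h, top_add']
    · rw [bigAdd_cons, ih h, add_top']

lemma map_range_split (f : ℕ → L) {k i : ℕ} (h : i < k) :
    (List.range k).map f =
      (List.range i).map f ++ f i ::
        (List.range (k - i - 1)).map (fun t => f (i + 1 + t)) := by
  conv_lhs => rw [show k = i + (k - i - 1 + 1) from by omega, List.range_add,
    List.range_succ_eq_map]
  rw [List.map_append, List.map_map, List.map_cons, List.map_map]
  congr 1
  congr 1
  congr 1
  funext t
  show f (i + (t + 1)) = f (i + 1 + t)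
  congr 1
  omega

lemma bigAdd_map_range_single (f : ℕ → L) {k i : ℕ} (hik : i < k)
    (hbot : ∀ j, j < k → j ≠ i → f j = ⊥) :
    bigAdd ((List.range k).map f) = f i := by
  rw [map_range_split f hik, bigAdd_append_bot, bigAdd_cons, bigAdd_bot, add_bot']
  · intro x hx
    obtain ⟨t, ht, rfl⟩ := List.mem_map.1 hx
    rw [List.mem_range] at ht
    exact hbot _ (by omega) (by omega)
  · intro x hx
    obtain ⟨t, ht, rfl⟩ := List.mem_map.1 hx
    rw [List.mem_range] at ht
    exact hbot _ (by omega) (by omega)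

lemma bigAdd_map_range_pair (f : ℕ → L) {k i j : ℕ} (hij : i < j) (hjk : j < k)
    (hbot : ∀ t, t < k → t ≠ i → t ≠ j → f t = ⊥) :
    bigAdd ((List.range k).map f) = add (f i) (f j) := by
  rw [map_range_split f (hij.trans hjk), bigAdd_append_bot, bigAdd_cons]
  · congr 1
    have hsplit : j - i - 1 < k - i - 1 := by omega
    rw [bigAdd_map_range_single (fun t => f (i + 1 + t)) (i := j - i - 1) hsplit]
    · show f (i + 1 + (j - i - 1)) = f j
      congr 1; omega
    · intro t ht hne
      exact hbot _ (by omega) (by omega) (by omega)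
  · intro x hx
    obtain ⟨t, ht, rfl⟩ := List.mem_map.1 hx
    rw [List.mem_range] at ht
    exact hbot _ (by omega) (by omega) (by omega)

/-! ### Entries of seqAdd for canonical sequences -/

section Entries

variable {a c : ℕ → L} {m n : ℕ}

lemma seqAdd_eq (a c : ℕ → L) (k : ℕ) :
    seqAdd a c k =
      add (a k)
        (bigAdd (((List.range k).map fun j => mul (a (k - 1 - j)) (c j)) ++ [c k])) := rfl

lemma seqAdd_lt (hA : Canon a m) (hC : Canon c n) {k : ℕ} (hk : k < m + n) :
    seqAdd a c k = ⊤ := by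
  show bigAdd _ = ⊤
  apply bigAdd_top
  rcases lt_or_ge k m with h | h
  · exact List.mem_cons.2 (Or.inl (hA.1 k h).symm)
  · rcases Nat.eq_zero_or_pos m with hm | hm
    · have hck : c k = ⊤ := hC.1 k (by omega)
      exact List.mem_cons.2 (Or.inr (List.mem_append.2 (Or.inr (by simp [hck]))))
    · have hmem : (k - m) ∈ List.range k := List.mem_range.2 (by omega)
      have hval : mul (a (k - 1 - (k - m))) (c (k - m)) = ⊤ := by
        rw [show k - 1 - (k - m) = m - 1 from by omega, hA.1 (m - 1) (by omega),
          hC.1 (k - m) (by omega), mul_top]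
      exact List.mem_cons.2 (Or.inr (List.mem_append.2 (Or.inl
        (List.mem_map.2 ⟨k - m, hmem, hval⟩))))

lemma seqAdd_gt (hA : Canon a m) (hC : Canon c n) {k : ℕ} (hk : m + n + 1 < k) :
    seqAdd a c k = ⊥ := by
  show bigAdd _ = ⊥
  apply bigAdd_bot
  intro x hx
  rcases List.mem_cons.1 hx with rfl | hx
  · exact hA.2 k (by omega)
  rcases List.mem_append.1 hx with hx | hx
  · obtain ⟨j, hj, rfl⟩ := List.mem_map.1 hx
    rw [List.mem_range] at hj
    rcases le_or_gt j n with hjn | hjn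
    · rw [hA.2 (k - 1 - j) (by omega), bot_mul]
    · rw [hC.2 j hjn, mul_bot]
  · rw [List.mem_singleton.1 hx]
    exact hC.2 k (by omega)

lemma seqAdd_succ_entry (hA : Canon a m) (hC : Canon c n) :
    seqAdd a c (m + n + 1) = mul (a m) (c n) := by
  rw [seqAdd_eq, hA.2 (m + n + 1) (by omega), hC.2 (m + n + 1) (by omega), bot_add']
  rw [bigAdd_append_right_bot (by rw [bigAdd_cons, bigAdd_nil, add_bot'])]
  rw [bigAdd_map_range_single _ (i := n) (by omega)]
  · rw [show m + n + 1 - 1 - n = m from by omega]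
  · intro j hj hne
    rcases lt_or_gt_of_ne hne with h | h
    · rw [hA.2 (m + n + 1 - 1 - j) (by omega), bot_mul]
    · rw [hC.2 j h, mul_bot]

lemma seqAdd_main_entry (hA : Canon a m) (hC : Canon c n) :
    seqAdd a c (m + n) = add (a m) (c n) := by
  rcases Nat.eq_zero_or_pos n with hn | hn
  · subst hn
    rcases Nat.eq_zero_or_pos m with hm | hm
    · subst hm
      show seqAdd a c 0 = add (a 0) (c 0)
      rw [seqAdd_eq]
      simp only [List.range_zero, List.map_nil, List.nil_append]
      rw [bigAdd_cons, bigAdd_nil, add_bot']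
    · rw [seqAdd_eq, Nat.add_zero,
        bigAdd_append_right_bot (by rw [bigAdd_cons, bigAdd_nil, add_bot']; exact hC.2 m hm)]
      congr 1
      rw [bigAdd_map_range_single _ (i := 0) (by omega)]
      · rw [show m - 1 - 0 = m - 1 from by omega, hA.1 (m - 1) (by omega), top_mul]
      · intro j hj hne
        rw [hC.2 j (by omega), mul_bot]
  · rcases Nat.eq_zero_or_pos m with hm | hm
    · subst hm
      rw [seqAdd_eq, Nat.zero_add, hA.2 n hn, bot_add']
      rw [map_range_split _ (show n - 1 < n from by omega), List.append_assoc,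
        List.cons_append, bigAdd_append_bot, bigAdd_cons]
      · have h1 : (List.range (n - (n - 1) - 1)).map
            (fun t => mul (a (n - 1 - (n - 1 + 1 + t))) (c (n - 1 + 1 + t))) = [] := by
          rw [show n - (n - 1) - 1 = 0 from by omega, List.range_zero, List.map_nil]
        rw [h1, List.nil_append, bigAdd_cons, bigAdd_nil, add_bot']
        rw [show n - 1 - (n - 1) = 0 from by omega, hC.1 (n - 1) (by omega), mul_top]
      · intro x hx
        obtain ⟨t, ht, rfl⟩ := List.mem_map.1 hx
        rw [List.mem_range] at ht
        rw [hA.2 (n - 1 - t) (by omega), bot_mul]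
    · rw [seqAdd_eq, hA.2 (m + n) (by omega), bot_add',
        bigAdd_append_right_bot
          (by rw [bigAdd_cons, bigAdd_nil, add_bot']; exact hC.2 (m + n) (by omega))]
      rw [bigAdd_map_range_pair _ (i := n - 1) (j := n) (by omega) (by omega)]
      · rw [show m + n - 1 - (n - 1) = m from by omega, hC.1 (n - 1) (by omega), mul_top,
          show m + n - 1 - n = m - 1 from by omega, hA.1 (m - 1) (by omega), top_mul]
      · intro t ht hne1 hne2
        rcases lt_or_gt_of_ne hne2 with h | h
        · rw [hA.2 (m + n - 1 - t) (by omega), bot_mul]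
        · rw [hC.2 t h, mul_bot]

end Entries

/-- The asymmetric core of the cancellation argument. -/
lemma cancel_core (htot : ∀ x y : L, x ≤ y ∨ y ≤ x)
    (hcanc : ∀ x y z : L, add x y = add x z → mul x y = mul x z → y = z)
    (hnt : (⊥ : L) ≠ ⊤)
    {a b c : ℕ → L} {m p n : ℕ} (hA : Canon a m) (hB : Canon b p) (hC : Canon c n)
    (hmp : m ≤ p) (h : seqAdd a c = seqAdd b c) : ∀ k, a k = b k := by
  have hmain : add (a m) (c n) = seqAdd b c (m + n) := by
    rw [← seqAdd_main_entry hA hC, h]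
  have hsucc : mul (a m) (c n) = seqAdd b c (m + n + 1) := by
    rw [← seqAdd_succ_entry hA hC, h]
  rcases eq_or_lt_of_le hmp with heq | hlt
  · -- m = p
    subst heq
    rw [seqAdd_main_entry hB hC] at hmain
    rw [seqAdd_succ_entry hB hC] at hsucc
    have hab : a m = b m :=
      hcanc (c n) (a m) (b m)
        (by rw [add_comm' (c n) (a m), add_comm' (c n) (b m)]; exact hmain)
        (by rw [mul_comm (c n) (a m), mul_comm (c n) (b m)]; exact hsucc)
    intro k
    rcases lt_trichotomy k m with hk | rfl | hk
    · rw [hA.1 k hk, hB.1 k hk]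
    · exact hab
    · rw [hA.2 k hk, hB.2 k hk]
  · -- m < p
    have htopadd : add (a m) (c n) = ⊤ := by
      rw [hmain, seqAdd_lt hB hC (by omega)]
    rcases eq_or_lt_of_le (show m + 1 ≤ p from hlt) with hp | hp
    · -- p = m + 1
      have h2 : mul (a m) (c n) = add (b p) (c n) := by
        rw [hsucc, show m + n + 1 = p + n from by omega, seqAdd_main_entry hB hC]
      have h3 : (⊥ : L) = mul (b p) (c n) := by
        rw [← seqAdd_succ_entry hB hC, ← h, show p + n + 1 = m + n + 1 + 1 from by omega,
          seqAdd_gt hA hC (by omega)]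
      have hmulγ : mul (a m) (c n) = c n := by
        refine le_antisymm (mul_le_right _ _) ?_
        rw [h2]
        exact le_add_right _ _
      have hα : a m = ⊤ := by
        refine hcanc (c n) (a m) ⊤ ?_ ?_
        · rw [add_comm' (c n) (a m), htopadd, add_top']
        · rw [mul_comm (c n) (a m), hmulγ, mul_top]
      have hβ : b p = ⊥ := by
        refine hcanc (c n) (b p) ⊥ ?_ ?_
        · rw [add_comm' (c n) (b p), ← h2, hmulγ, add_bot']
        · rw [mul_comm (c n) (b p), ← h3, mul_bot]
      intro k
      rcases lt_trichotomy k m with hk | hk | hk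
      · rw [hA.1 k hk, hB.1 k (by omega)]
      · rw [hk, hα, hB.1 m (by omega)]
      · rcases eq_or_lt_of_le (show m + 1 ≤ k from hk) with hk' | hk'
        · rw [hA.2 k (by omega), ← hk', hp, hβ]
        · rw [hA.2 k (by omega), hB.2 k (by omega)]
    · -- m + 1 < p : derive a contradiction
      exfalso
      have hmultop : mul (a m) (c n) = ⊤ := by
        rw [hsucc, seqAdd_lt hB hC (by omega)]
      have hγ : c n = ⊤ := le_antisymm le_top (hmultop ▸ mul_le_right (a m) (c n))
      have hbotk : seqAdd a c (m + n + 2) = ⊥ := seqAdd_gt hA hC (by omega)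
      rcases eq_or_lt_of_le (show m + n + 2 ≤ p + n from by omega) with hk | hk
      · have : seqAdd b c (m + n + 2) = add (b p) (c n) := by
          rw [hk, seqAdd_main_entry hB hC]
        rw [h, this, hγ, add_top'] at hbotk
        exact hnt hbotk.symm
      · rw [h, seqAdd_lt hB hC hk] at hbotk
        exact hnt hbotk.symm

end BLAlgebra


/-- If C is a BL-chain of cancellative type (x + y = x + z and
x ⊗ y = x ⊗ z imply y = z), then the monoid of good sequences of C is
cancellative. -/
theorem good_seqs_cancellative_chain {L : Type*} [BLAlgebra L]
    (htot : ∀ x y : L, x ≤ y ∨ y ≤ x)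
    (hcanc : ∀ x y z : L, add x y = add x z → mul x y = mul x z → y = z)
    (a b c : ℕ → L) (ha : IsGood a) (hb : IsGood b) (hc : IsGood c)
    (h : seqAdd a c = seqAdd b c) : a = b := by
  by_cases hnt : (⊥ : L) = ⊤
  · have hall : ∀ x : L, x = ⊤ := fun x => le_antisymm le_top (hnt ▸ bot_le)
    funext k; rw [hall (a k), hall (b k)]
  · obtain ⟨m, hA⟩ := exists_canon htot hcanc hnt ha
    obtain ⟨p, hB⟩ := exists_canon htot hcanc hnt hb
    obtain ⟨n, hC⟩ := exists_canon htot hcanc hnt hc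
    funext k
    rcases le_total m p with hmp | hmp
    · exact cancel_core htot hcanc hnt hA hB hC hmp h k
    · exact (cancel_core htot hcanc hnt hB hA hC hmp h.symm k).symm
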